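/- Bound on the incremental operator error (Lemma 1). Let n, b ≥ 1 and γ > 0. Let g_1,…,g_b : ℝ^n → ℝ be convex and Lipschitz continuous with constants L_1,…,L_b; set L := max{L_1,…,L_b} and g := (1/b)·Σ_{i=1}^b g_i. Let D : ℝ^n → ℝ^n be any map, and define S(v) := D(v) − prox_{γg}(2·D(v) − v) and, for each i ∈ {1,…,b}, S_i(v) := D(v) − prox_{γ g_i}(2·D(v) − v). Then for every i ∈ {1,…,b} and every v ∈ ℝ^n, ‖S_i(v) − S(v)‖ ≤ 2γL; consequently, if i is a random index uniformly distributed on {1,…,b}, then E[‖S_i(v) − S(v)‖²] ≤ 4γ²L². -/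

import Mathlib

open MeasureTheory
open scoped RealInnerProductSpace

/-- Euclidean space ℝ^n. -/
abbrev En (n : ℕ) := EuclideanSpace ℝ (Fin n)

/-- `G` is the proximal operator `prox_{γf}`: for every `z`, `G z` minimizes
`x ↦ (1/2)‖x − z‖² + γ f x` over `ℝ^n`. -/
def IsProx {n : ℕ} (γ : ℝ) (f : En n → ℝ) (G : En n → En n) : Prop :=
  ∀ z x : En n,
    (1 / 2 : ℝ) * ‖G z - z‖ ^ 2 + γ * f (G z) ≤ (1 / 2 : ℝ) * ‖x - z‖ ^ 2 + γ * f x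

lemma norm_combo_sq {n : ℕ} (p q z : En n) (t : ℝ) :
    ‖((1-t)•p + t•q) - z‖^2
      = (1-t)*‖p-z‖^2 + t*‖q-z‖^2 - t*(1-t)*‖q-p‖^2 := by
  have h1 : ((1-t)•p + t•q) - z = (p - z) + t•(q - p) := by module
  have h2 : q - z = (p - z) + (q - p) := by abel
  rw [h1, h2, @norm_add_sq_real, @norm_add_sq_real, real_inner_smul_right,
    norm_smul, Real.norm_eq_abs, mul_pow, sq_abs]
  ring

lemma prox_strong {n : ℕ} {γ : ℝ} (hγ : 0 < γ) {f : En n → ℝ}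
    (hf : ConvexOn ℝ Set.univ f) {F : En n → En n} (hF : IsProx γ f F)
    (z x : En n) :
    (1/2:ℝ)*‖F z - z‖^2 + γ * f (F z) + (1/2)*‖x - F z‖^2
      ≤ (1/2)*‖x - z‖^2 + γ * f x := by
  set p := F z with hp
  have key : ∀ t : ℝ, 0 < t → t ≤ 1 →
      (1/2:ℝ)*(1-t)*‖x-p‖^2 + (1/2)*‖p-z‖^2 + γ * f p
        ≤ (1/2)*‖x-z‖^2 + γ * f x := by
    intro t ht ht1
    have hxt := hF z ((1-t)•p + t•x)
    have hcv : f ((1-t)•p + t•x) ≤ (1-t) * f p + t * f x :=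
      hf.2 (Set.mem_univ p) (Set.mem_univ x) (by linarith) (le_of_lt ht) (by ring)
    rw [norm_combo_sq] at hxt
    have h3 : γ * f ((1-t)•p + t•x) ≤ γ * ((1-t) * f p + t * f x) :=
      mul_le_mul_of_nonneg_left hcv (le_of_lt hγ)
    nlinarith [hxt, h3, ht, norm_nonneg (x - p), sq_nonneg ‖x-p‖]
  have hc : (1/2:ℝ)*‖x-p‖^2 + (1/2)*‖p-z‖^2 + γ * f p
      ≤ (1/2)*‖x-z‖^2 + γ * f x := by
    have hε : ∀ ε : ℝ, 0 < ε →
        (1/2:ℝ)*‖x-p‖^2 + (1/2)*‖p-z‖^2 + γ * f p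
          ≤ (1/2)*‖x-z‖^2 + γ * f x + ε := by
      intro ε hε
      set c := ‖x-p‖^2 with hcdef
      have hc0 : 0 ≤ c := sq_nonneg _
      set t := min 1 (ε / (c + 1)) with htdef
      have ht0 : 0 < t := lt_min one_pos (div_pos hε (by linarith))
      have ht1 : t ≤ 1 := min_le_left _ _
      have h := key t ht0 ht1
      have htc : t * c ≤ ε := by
        have h1 : t ≤ ε / (c + 1) := min_le_right _ _
        have h2 : t * c ≤ (ε / (c+1)) * c := mul_le_mul_of_nonneg_right h1 hc0
        have h3 : (ε / (c+1)) * c ≤ ε := by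
          rw [div_mul_eq_mul_div, div_le_iff₀ (by linarith)]
          nlinarith
        linarith
      nlinarith
    by_contra hcon
    push_neg at hcon
    have := hε (((1/2:ℝ)*‖x-p‖^2 + (1/2)*‖p-z‖^2 + γ * f p
        - ((1/2)*‖x-z‖^2 + γ * f x))/2) (by linarith)
    linarith
  linarith [hc]

/-- Distance between prox operators of two convex functions whose difference
has one-sided Lipschitz bound `M`. -/
lemma prox_dist {n : ℕ} {γ : ℝ} (hγ : 0 < γ) {f h : En n → ℝ}
    (hf : ConvexOn ℝ Set.univ f) (hh : ConvexOn ℝ Set.univ h)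
    {F H : En n → En n} (hF : IsProx γ f F) (hH : IsProx γ h H)
    {M : ℝ} (hM0 : 0 ≤ M)
    (hM : ∀ x y : En n, (f x - h x) - (f y - h y) ≤ M * ‖x - y‖)
    (z : En n) : ‖F z - H z‖ ≤ γ * M := by
  set p := F z with hp
  set q := H z with hq
  have h1 := prox_strong hγ hf hF z q
  have h2 := prox_strong hγ hh hH z p
  -- h1: ½‖p-z‖²+γf p+½‖q-p‖² ≤ ½‖q-z‖²+γf q
  -- h2: ½‖q-z‖²+γh q+½‖p-q‖² ≤ ½‖p-z‖²+γh p
  have hrev : ‖p - q‖ = ‖q - p‖ := norm_sub_rev _ _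
  have hrev2 : ‖p - q‖^2 = ‖q - p‖^2 := by rw [hrev]
  simp only [← hp, ← hq] at h1 h2
  have hsum : ‖q - p‖^2 ≤ γ * ((f q - h q) - (f p - h p)) := by nlinarith [h1, h2, hrev2]
  have hlip := hM q p
  have hbd : ‖q - p‖^2 ≤ γ * M * ‖q - p‖ := by
    have := mul_le_mul_of_nonneg_left hlip (le_of_lt hγ)
    calc ‖q - p‖^2 ≤ γ * ((f q - h q) - (f p - h p)) := hsum
      _ ≤ γ * (M * ‖q - p‖) := this
      _ = γ * M * ‖q - p‖ := by ring
  rcases eq_or_lt_of_le (norm_nonneg (q - p)) with h0 | h0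
  · rw [hrev, ← h0]; positivity
  · rw [hrev]
    have : ‖q - p‖ * ‖q - p‖ ≤ (γ * M) * ‖q - p‖ := by nlinarith
    exact le_of_mul_le_mul_right this h0

/-- Bound on the incremental operator error (Lemma 1): a deterministic bound
`‖S_i(v) − S(v)‖ ≤ 2γL` for every index `i`, and consequently the expectation bound
`E[‖S_I(v) − S(v)‖²] ≤ 4γ²L²` for a uniformly distributed random index `I`. -/
theorem incremental_operator_error_bound {n b : ℕ} (hn : 1 ≤ n) (hb : 1 ≤ b)
    (γ : ℝ) (hγ : 0 < γ)
    (g : Fin b → En n → ℝ)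
    (hconv : ∀ i, ConvexOn ℝ Set.univ (g i))
    (Lc : Fin b → ℝ)
    (hlip : ∀ i, ∀ x y : En n, |g i x - g i y| ≤ Lc i * ‖x - y‖)
    (L : ℝ) (hL : L = ⨆ i, Lc i)
    (D : En n → En n)
    (G : En n → En n) (hG : IsProx γ (fun x => (1 / (b : ℝ)) * ∑ i, g i x) G)
    (Gi : Fin b → En n → En n) (hGi : ∀ i, IsProx γ (g i) (Gi i))
    (S : En n → En n) (hS : ∀ v : En n, S v = D v - G ((2 : ℝ) • D v - v))
    (Si : Fin b → En n → En n)
    (hSi : ∀ i, ∀ v : En n, Si i v = D v - Gi i ((2 : ℝ) • D v - v))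
    (Ω : Type*) [MeasurableSpace Ω] (μ : Measure Ω) [IsProbabilityMeasure μ]
    (I : Ω → Fin b) (hImeas : Measurable I)
    (hIunif : ∀ i : Fin b, μ {ω | I ω = i} = 1 / (b : ENNReal))
    (v : En n) :
    (∀ (i : Fin b) (w : En n), ‖Si i w - S w‖ ≤ 2 * γ * L) ∧
      ∫ ω, ‖Si (I ω) v - S v‖ ^ 2 ∂μ ≤ 4 * γ ^ 2 * L ^ 2 := by
  haveI : Nonempty (Fin b) := ⟨⟨0, hb⟩⟩
  have hb0 : (0:ℝ) < (b:ℝ) := by exact_mod_cast hb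
  -- each Lc i ≤ L and 0 ≤ Lc i
  have hLc0 : ∀ i, 0 ≤ Lc i := by
    intro i
    have hx : (EuclideanSpace.single (⟨0, hn⟩ : Fin n) (1:ℝ) : En n) ≠ 0 := by
      intro hcontra
      have := congrArg (fun f : En n => f ⟨0, hn⟩) hcontra
      simp [EuclideanSpace.single] at this
    have h := hlip i (EuclideanSpace.single (⟨0, hn⟩ : Fin n) (1:ℝ)) 0
    have hnorm : (0:ℝ) < ‖(EuclideanSpace.single (⟨0, hn⟩ : Fin n) (1:ℝ) : En n) - 0‖ := by
      rw [sub_zero]; exact norm_pos_iff.mpr hx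
    nlinarith [abs_nonneg (g i (EuclideanSpace.single (⟨0, hn⟩ : Fin n) (1:ℝ)) - g i 0)]
  have hLcL : ∀ i, Lc i ≤ L := by
    intro i; rw [hL]
    exact le_ciSup (Set.Finite.bddAbove (Set.finite_range Lc)) i
  have hL0 : 0 ≤ L := le_trans (hLc0 ⟨0, hb⟩) (hLcL ⟨0, hb⟩)
  -- each g i is L-Lipschitz, hence the average too
  have hglip : ∀ i, ∀ x y : En n, |g i x - g i y| ≤ L * ‖x - y‖ := by
    intro i x y
    exact le_trans (hlip i x y) (mul_le_mul_of_nonneg_right (hLcL i) (norm_nonneg _))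
  set f : En n → ℝ := fun x => (1 / (b : ℝ)) * ∑ i, g i x with hfdef
  have hflip : ∀ x y : En n, |f x - f y| ≤ L * ‖x - y‖ := by
    intro x y
    have : f x - f y = (1 / (b:ℝ)) * ∑ i, (g i x - g i y) := by
      rw [hfdef]; simp [Finset.mul_sum, Finset.sum_sub_distrib, mul_sub]
    rw [this, abs_mul, abs_of_pos (by positivity : (0:ℝ) < 1/(b:ℝ))]
    calc (1/(b:ℝ)) * |∑ i, (g i x - g i y)|
        ≤ (1/(b:ℝ)) * ∑ i, |g i x - g i y| :=
          mul_le_mul_of_nonneg_left (Finset.abs_sum_le_sum_abs _ _) (by positivity)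
      _ ≤ (1/(b:ℝ)) * ∑ _i : Fin b, L * ‖x - y‖ :=
          mul_le_mul_of_nonneg_left
            (Finset.sum_le_sum fun i _ => hglip i x y) (by positivity)
      _ = L * ‖x - y‖ := by
          rw [Finset.sum_const, Finset.card_univ, Fintype.card_fin, nsmul_eq_mul]
          field_simp
  have hfconv : ConvexOn ℝ Set.univ f := by
    have hsum : ∀ s : Finset (Fin b), ConvexOn ℝ Set.univ (fun x => ∑ i ∈ s, g i x) := by
      intro s
      induction s using Finset.induction with
      | empty => simpa using convexOn_const (0:ℝ) convex_univ
      | insert _ _ hx ih =>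
          simp only [Finset.sum_insert hx]
          exact (hconv _).add ih
    exact (hsum Finset.univ).smul (by positivity)
  -- deterministic bound
  have det : ∀ (i : Fin b) (w : En n), ‖Si i w - S w‖ ≤ 2 * γ * L := by
    intro i w
    rw [hSi, hS]
    have heq : D w - Gi i ((2:ℝ) • D w - w) - (D w - G ((2:ℝ) • D w - w))
        = G ((2:ℝ) • D w - w) - Gi i ((2:ℝ) • D w - w) := by abel
    rw [heq]
    have hM : ∀ x y : En n, (f x - g i x) - (f y - g i y) ≤ (2*L) * ‖x - y‖ := by
      intro x y
      have h1 := hflip x y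
      have h2 := hglip i y x
      have h3 : ‖y - x‖ = ‖x - y‖ := norm_sub_rev _ _
      rw [h3] at h2
      have := abs_le.mp h1
      have := abs_le.mp h2
      nlinarith [abs_le.mp h1, abs_le.mp h2]
    have := prox_dist hγ hfconv (hconv i) hG (hGi i) (by positivity : (0:ℝ) ≤ 2*L)
      hM ((2:ℝ) • D w - w)
    calc ‖G ((2:ℝ) • D w - w) - Gi i ((2:ℝ) • D w - w)‖ ≤ γ * (2*L) := this
      _ = 2 * γ * L := by ring
  refine ⟨det, ?_⟩
  -- expectation bound
  have hpt : ∀ ω, ‖Si (I ω) v - S v‖ ^ 2 ≤ 4 * γ^2 * L^2 := by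
    intro ω
    have h := det (I ω) v
    nlinarith [norm_nonneg (Si (I ω) v - S v)]
  have hpt0 : ∀ ω, (0:ℝ) ≤ ‖Si (I ω) v - S v‖ ^ 2 := fun ω => sq_nonneg _
  have hmeas : AEStronglyMeasurable (fun ω => ‖Si (I ω) v - S v‖ ^ 2) μ := by
    have : Measurable (fun i : Fin b => ‖Si i v - S v‖ ^ 2) := measurable_of_countable _
    exact (this.comp hImeas).aestronglyMeasurable
  have hint : Integrable (fun ω => ‖Si (I ω) v - S v‖ ^ 2) μ := by
    refine (integrable_const (4 * γ^2 * L^2)).mono' hmeas ?_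
    filter_upwards with ω
    rw [Real.norm_eq_abs, abs_of_nonneg (hpt0 ω)]
    exact hpt ω
  calc ∫ ω, ‖Si (I ω) v - S v‖ ^ 2 ∂μ
      ≤ ∫ _ω, 4 * γ^2 * L^2 ∂μ := integral_mono hint (integrable_const _) hpt
    _ = 4 * γ^2 * L^2 := by simp
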